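/- Let T, A ∈ ℕ, q_1,...,q_A ∈ (0,1], δ ∈ (0,1), and set T̲_a := 1 + 24 ln(T)/q_a and A_cen := Σ_a 1/q_a. For each arm a, suppose at most T draws of i.i.d. Bernoulli(q_a) indicators occur. Then the probability that there exist an arm a and a number of pulls κ_a with T̲_a ≤ κ_a ≤ T such that Σ_{ℓ=1}^{κ_a} 1[C_{a,ℓ}=1] ≤ (1−δ) q_a κ_a is at most (2/δ²) · T^{1−12δ²} · A_cen. -/

import Mathlib

open MeasureTheory Real ProbabilityTheory
open scoped ENNReal


lemma aux_exp_quad {x : ℝ} (hx : 0 ≤ x) : Real.exp (-x) ≤ 1 - x + x ^ 2 / 2 := by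
  have hmono : Monotone (fun y : ℝ => 1 - y + y ^ 2 / 2 - Real.exp (-y)) := by
    apply monotone_of_deriv_nonneg
    · fun_prop
    · intro y
      have hd : HasDerivAt (fun y : ℝ => 1 - y + y ^ 2 / 2 - Real.exp (-y))
          (0 - 1 + (2 : ℕ) * y ^ 1 / 2 - Real.exp (-y) * (-1)) y := by
        have h1 : HasDerivAt (fun y : ℝ => 1 - y + y ^ 2 / 2) (0 - 1 + (2:ℕ) * y ^ 1 / 2) y :=
          ((hasDerivAt_const y (1:ℝ)).sub (hasDerivAt_id y)).add ((hasDerivAt_pow 2 y).div_const 2)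
        exact h1.sub ((Real.hasDerivAt_exp (-y)).comp y ((hasDerivAt_id y).neg))
      rw [hd.deriv]
      have := Real.add_one_le_exp (-y)
      push_cast
      nlinarith
  have h := hmono hx
  simp only [neg_zero, Real.exp_zero] at h
  nlinarith [h]

lemma aux_reindex {Ω ι ι' : Type*} [MeasurableSpace Ω] {μ : Measure Ω}
    (g : ι' → ι) (hg : Function.Injective g) (f : ι → Ω → ℝ)
    (h : iIndepFun f μ) :
    iIndepFun (fun j => f (g j)) μ := by
  classical
  rw [iIndepFun_iff_measure_inter_preimage_eq_mul] at h ⊢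
  intro S sets hsets
  cases isEmpty_or_nonempty ι' with
  | inl hempty =>
    have h0 := h ∅ (sets := fun _ => Set.univ) (by simp)
    simp only [Finset.eq_empty_of_isEmpty S]
    simpa using h0
  | inr hne =>
    set sets' : ι → Set ℝ := fun i => sets (Function.invFun g i) with hsets'
    have hinv : ∀ j, Function.invFun g (g j) = j := Function.leftInverse_invFun hg
    have key := h (S.map ⟨g, hg⟩) (sets := sets') ?_
    · have h1 : (⋂ i ∈ S.map ⟨g, hg⟩, f i ⁻¹' sets' i) = ⋂ j ∈ S, f (g j) ⁻¹' sets j := by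
        ext ω
        simp only [Set.mem_iInter, Finset.mem_map, Function.Embedding.coeFn_mk]
        constructor
        · intro hmem j hj
          have := hmem (g j) ⟨j, hj, rfl⟩
          simpa [hsets', hinv j] using this
        · rintro hmem i ⟨j, hj, rfl⟩
          simp only [hsets', Set.mem_preimage, hinv j]
          exact hmem j hj
      have h2 : (∏ i ∈ S.map ⟨g, hg⟩, μ (f i ⁻¹' sets' i)) =
          ∏ j ∈ S, μ (f (g j) ⁻¹' sets j) := by
        rw [Finset.prod_map]
        exact Finset.prod_congr rfl fun j _ => by simp [hsets', hinv j]
      rw [h1, h2] at key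
      exact key
    · rintro i hi
      obtain ⟨j, hj, rfl⟩ := Finset.mem_map.mp hi
      simpa [hsets', hinv j] using hsets j hj

/-- Probability of the "missingness" failure event: for independent arrays of
Bernoulli(q_a) indicators, the probability that some arm `a` and some pull
count `κ` with `1 + 24 ln T / q_a ≤ κ ≤ T` satisfy
`Σ_{ℓ=1}^κ C_{a,ℓ} ≤ (1−δ) q_a κ` is at most `(2/δ²) T^{1−12δ²} Σ_a (1/q_a)`. -/
theorem stmt_8 {Ω : Type*} [MeasurableSpace Ω] (μ : Measure Ω) [IsProbabilityMeasure μ]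
    (A T : ℕ) (hT : 1 ≤ T) (q : Fin A → ℝ) (hq : ∀ a, q a ∈ Set.Ioc (0 : ℝ) 1)
    (δ : ℝ) (hδ : δ ∈ Set.Ioo (0 : ℝ) 1)
    (C : Fin A × ℕ → Ω → ℝ) (hmeas : ∀ i, Measurable (C i))
    (hindep : iIndepFun C μ)
    (hdist : ∀ a ℓ, μ.map (C (a, ℓ)) =
      ENNReal.ofReal (q a) • Measure.dirac (1 : ℝ) + ENNReal.ofReal (1 - q a) • Measure.dirac 0) :
    μ {ω | ∃ a : Fin A, ∃ κ : ℕ, κ ≤ T ∧ (1 + 24 * Real.log T / q a ≤ (κ : ℝ)) ∧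
        ∑ ℓ ∈ Finset.range κ, C (a, ℓ) ω ≤ (1 - δ) * q a * κ} ≤
      ENNReal.ofReal ((2 / δ ^ 2) * (T : ℝ) ^ ((1 : ℝ) - 12 * δ ^ 2) * ∑ a, 1 / q a) := by
  have hae : ∀ i : Fin A × ℕ, ∀ᵐ ω ∂μ, C i ω = 0 ∨ C i ω = 1 := by
    intro i
    have hs : MeasurableSet ({0, 1}ᶜ : Set ℝ) := (by measurability)
    have h0 : μ.map (C i) ({0, 1}ᶜ) = 0 := by
      rw [hdist i.1 i.2]
      simp [Measure.dirac_apply' _ hs, Set.indicator_apply]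
    rw [Measure.map_apply (hmeas i) hs] at h0
    have hset : {ω | ¬(C i ω = 0 ∨ C i ω = 1)} = C i ⁻¹' {0, 1}ᶜ := by
      ext ω; simp [not_or]
    show μ {ω | ¬(C i ω = 0 ∨ C i ω = 1)} = 0
    rw [hset]; exact h0
  have hint : ∀ (i : Fin A × ℕ) (t : ℝ), t ≤ 0 →
      Integrable (fun ω => Real.exp (t * C i ω)) μ := by
    intro i t ht
    refine Integrable.mono' (integrable_const (1:ℝ))
      (((hmeas i).const_mul t).exp.aestronglyMeasurable) ?_
    filter_upwards [hae i] with ω hω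
    rw [Real.norm_eq_abs, abs_of_pos (Real.exp_pos _)]
    rcases hω with h | h <;> simp [h, Real.exp_le_one_iff, ht]
  have hmgf : ∀ (a : Fin A) (ℓ : ℕ) (t : ℝ),
      mgf (C (a, ℓ)) μ t = q a * Real.exp t + (1 - q a) := by
    intro a ℓ t
    have hqa := hq a
    have hg : AEStronglyMeasurable (fun x : ℝ => Real.exp (t * x)) (μ.map (C (a,ℓ))) := by
      exact ((measurable_id.const_mul t).exp).aestronglyMeasurable
    have h1 : mgf (C (a, ℓ)) μ t = ∫ x, Real.exp (t * x) ∂(μ.map (C (a,ℓ))) := by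
      rw [mgf, integral_map (hmeas (a,ℓ)).aemeasurable hg]
    rw [h1, hdist a ℓ]
    have hd1 : Integrable (fun x : ℝ => Real.exp (t * x)) (Measure.dirac (1:ℝ)) :=
      (integrable_const (Real.exp (t * 1))).congr (by rw [ae_dirac_eq]; exact Filter.eventually_pure.mpr rfl)
    have hd0 : Integrable (fun x : ℝ => Real.exp (t * x)) (Measure.dirac (0:ℝ)) :=
      (integrable_const (Real.exp (t * 0))).congr (by rw [ae_dirac_eq]; exact Filter.eventually_pure.mpr rfl)
    rw [integral_add_measure (hd1.smul_measure ENNReal.ofReal_ne_top)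
        (hd0.smul_measure ENNReal.ofReal_ne_top),
      integral_smul_measure, integral_smul_measure, integral_dirac, integral_dirac,
      ENNReal.toReal_ofReal hqa.1.le, ENNReal.toReal_ofReal (by linarith [hqa.2])]
    simp [mul_comm]
  have key : ∀ (a : Fin A) (κ : ℕ), (1 : ℝ) + 24 * Real.log T / q a ≤ (κ : ℝ) →
      μ {ω | ∑ ℓ ∈ Finset.range κ, C (a, ℓ) ω ≤ (1 - δ) * q a * κ} ≤
      ENNReal.ofReal ((T : ℝ) ^ (-(12 * δ ^ 2) : ℝ)) := by
    intro a κ hκ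
    obtain ⟨hδ0, hδ1⟩ := hδ
    obtain ⟨hq0, hq1⟩ := hq a
    have hlogT : 0 ≤ Real.log T := Real.log_nonneg (by exact_mod_cast hT)
    have ht : (-δ : ℝ) ≤ 0 := by linarith
    set X : ℕ → Ω → ℝ := fun ℓ => C (a, ℓ) with hX
    have hXindep : iIndepFun X μ :=
      aux_reindex (fun ℓ => (a, ℓ)) (fun x y h => by simpa using (Prod.mk.injEq .. ▸ h).2) C hindep
    have hXmeas : ∀ ℓ, Measurable (X ℓ) := fun ℓ => hmeas (a, ℓ)
    have hint_sum : Integrable (fun ω => Real.exp (-δ * (∑ ℓ ∈ Finset.range κ, X ℓ) ω)) μ :=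
      hXindep.integrable_exp_mul_sum hXmeas (fun ℓ _ => hint (a, ℓ) (-δ) ht)
    have hch := measure_le_le_exp_mul_mgf (X := ∑ ℓ ∈ Finset.range κ, X ℓ)
      ((1 - δ) * q a * κ) ht hint_sum
    rw [hXindep.mgf_sum hXmeas] at hch
    have hprod : (∏ ℓ ∈ Finset.range κ, mgf (X ℓ) μ (-δ)) =
        (q a * Real.exp (-δ) + (1 - q a)) ^ κ := by
      rw [Finset.prod_congr rfl fun ℓ _ => hmgf a ℓ (-δ), Finset.prod_const, Finset.card_range]
    rw [hprod] at hch
    -- real-number bound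
    have hm0 : (0 : ℝ) ≤ q a * Real.exp (-δ) + (1 - q a) := by
      have := Real.exp_pos (-δ); nlinarith
    have hm1 : q a * Real.exp (-δ) + (1 - q a) ≤ Real.exp (-(q a * (δ - δ ^ 2 / 2))) := by
      have h1 : Real.exp (-δ) ≤ 1 - δ + δ ^ 2 / 2 := aux_exp_quad hδ0.le
      have h2 : q a * Real.exp (-δ) + (1 - q a) ≤ 1 + (-(q a * (δ - δ ^ 2 / 2))) := by nlinarith
      exact h2.trans (by linarith [Real.add_one_le_exp (-(q a * (δ - δ ^ 2 / 2)))])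
    have hpow : (q a * Real.exp (-δ) + (1 - q a)) ^ κ ≤
        Real.exp (-(q a * (δ - δ ^ 2 / 2)) * κ) := by
      calc (q a * Real.exp (-δ) + (1 - q a)) ^ κ
          ≤ (Real.exp (-(q a * (δ - δ ^ 2 / 2)))) ^ κ := pow_le_pow_left₀ hm0 hm1 κ
        _ = Real.exp (-(q a * (δ - δ ^ 2 / 2)) * κ) := by
            rw [← Real.exp_nat_mul]; ring_nf
    have hreal : Real.exp (-(-δ) * ((1 - δ) * q a * κ)) *
        (q a * Real.exp (-δ) + (1 - q a)) ^ κ ≤ (T : ℝ) ^ (-(12 * δ ^ 2) : ℝ) := by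
      have h3 : Real.exp (-(-δ) * ((1 - δ) * q a * κ)) *
          (q a * Real.exp (-δ) + (1 - q a)) ^ κ ≤
          Real.exp (δ * ((1 - δ) * q a * κ) + -(q a * (δ - δ ^ 2 / 2)) * κ) := by
        rw [Real.exp_add, neg_neg]
        exact mul_le_mul_of_nonneg_left hpow (Real.exp_pos _).le
      refine h3.trans ?_
      rw [Real.rpow_def_of_pos (by positivity : (0:ℝ) < (T:ℝ))]
      apply Real.exp_le_exp.mpr
      have hκq : q a + 24 * Real.log T ≤ q a * κ := by
        have := mul_le_mul_of_nonneg_left hκ hq0.le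
        calc q a + 24 * Real.log T = q a * (1 + 24 * Real.log T / q a) := by
              field_simp
          _ ≤ q a * κ := this
      have hqκ : 24 * Real.log T ≤ q a * κ := by linarith
      have : δ * ((1 - δ) * q a * κ) + -(q a * (δ - δ ^ 2 / 2)) * κ
          = -(δ ^ 2 / 2) * (q a * κ) := by ring
      rw [this]
      nlinarith [sq_nonneg δ, mul_le_mul_of_nonneg_left hqκ (sq_nonneg δ)]
    -- back to ENNReal
    have hseteq : {ω | ∑ ℓ ∈ Finset.range κ, C (a, ℓ) ω ≤ (1 - δ) * q a * κ}
        = {ω | (∑ ℓ ∈ Finset.range κ, X ℓ) ω ≤ (1 - δ) * q a * κ} := by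
      ext ω; simp [hX, Finset.sum_apply]
    rw [hseteq, ← ENNReal.ofReal_toReal (measure_ne_top μ _)]
    exact ENNReal.ofReal_le_ofReal (hch.trans hreal)
  classical
  obtain ⟨hδ0, hδ1⟩ := hδ
  have hlogT : 0 ≤ Real.log T := Real.log_nonneg (by exact_mod_cast hT)
  set c : ℝ≥0∞ := ENNReal.ofReal ((T : ℝ) ^ (-(12 * δ ^ 2) : ℝ)) with hc
  set S : Fin A → ℕ → Set Ω := fun a κ =>
    {ω | κ ≤ T ∧ (1 + 24 * Real.log T / q a ≤ (κ : ℝ)) ∧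
      ∑ ℓ ∈ Finset.range κ, C (a, ℓ) ω ≤ (1 - δ) * q a * κ} with hS
  have hsub : {ω | ∃ a : Fin A, ∃ κ : ℕ, κ ≤ T ∧ (1 + 24 * Real.log T / q a ≤ (κ : ℝ)) ∧
      ∑ ℓ ∈ Finset.range κ, C (a, ℓ) ω ≤ (1 - δ) * q a * κ} = ⋃ a, ⋃ κ, S a κ := by
    ext ω; simp [hS, Set.mem_iUnion]
  rw [hsub]
  have hbound : ∀ a κ, μ (S a κ) ≤ if κ ∈ Finset.Icc 1 T then c else 0 := by
    intro a κ
    by_cases h1 : κ ≤ T ∧ (1 + 24 * Real.log T / q a ≤ (κ : ℝ))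
    · have hκ1 : 1 ≤ κ := by
        have hnn : 0 ≤ 24 * Real.log T / q a := by
          have := (hq a).1; positivity
        have : (1 : ℝ) ≤ (κ : ℝ) := le_trans (by linarith) h1.2
        exact_mod_cast this
      rw [if_pos (Finset.mem_Icc.mpr ⟨hκ1, h1.1⟩)]
      refine le_trans (measure_mono ?_) (key a κ h1.2)
      intro ω hω; exact hω.2.2
    · have : S a κ = ∅ := by
        ext ω; simp only [hS, Set.mem_setOf_eq, Set.mem_empty_iff_false, iff_false]
        intro h; exact h1 ⟨h.1, h.2.1⟩
      rw [this]; simp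
  calc μ (⋃ a, ⋃ κ, S a κ) ≤ ∑' a : Fin A, μ (⋃ κ, S a κ) := measure_iUnion_le _
    _ ≤ ∑' a : Fin A, ∑' κ : ℕ, μ (S a κ) :=
        ENNReal.tsum_le_tsum fun a => measure_iUnion_le _
    _ ≤ ∑' a : Fin A, ∑' κ : ℕ, (if κ ∈ Finset.Icc 1 T then c else 0) :=
        ENNReal.tsum_le_tsum fun a => ENNReal.tsum_le_tsum fun κ => hbound a κ
    _ = ∑' _ : Fin A, (T : ℝ≥0∞) * c := by
        congr 1
        ext a
        rw [tsum_eq_sum (s := Finset.Icc 1 T) (fun b hb => if_neg hb)]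
        rw [Finset.sum_congr rfl fun κ hκ => if_pos hκ, Finset.sum_const, Nat.card_Icc]
        simp [nsmul_eq_mul]
    _ = (A : ℝ≥0∞) * ((T : ℝ≥0∞) * c) := by
        rw [tsum_fintype]
        simp [Finset.sum_const, nsmul_eq_mul]
    _ ≤ ENNReal.ofReal ((2 / δ ^ 2) * (T : ℝ) ^ ((1 : ℝ) - 12 * δ ^ 2) * ∑ a, 1 / q a) := by
        have hA' : ((A : ℝ≥0∞)) = ENNReal.ofReal (A : ℝ) := by simp
        have hT' : ((T : ℝ≥0∞)) = ENNReal.ofReal (T : ℝ) := by simp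
        rw [hA', hT', hc, ← ENNReal.ofReal_mul (by positivity), ← ENNReal.ofReal_mul (by positivity)]
        apply ENNReal.ofReal_le_ofReal
        have hTpos : (0 : ℝ) < T := by exact_mod_cast hT
        have hr : (T : ℝ) ^ ((1 : ℝ) - 12 * δ ^ 2) = (T : ℝ) * (T : ℝ) ^ (-(12 * δ ^ 2) : ℝ) := by
          rw [show (1 : ℝ) - 12 * δ ^ 2 = 1 + -(12 * δ ^ 2) by ring,
            Real.rpow_add hTpos, Real.rpow_one]
        have hA2 : (A : ℝ) ≤ ∑ a, 1 / q a := by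
          calc (A : ℝ) = ∑ _a : Fin A, (1 : ℝ) := by simp
            _ ≤ ∑ a, 1 / q a := Finset.sum_le_sum fun a _ =>
                one_le_one_div (hq a).1 (hq a).2
        have h2 : (1 : ℝ) ≤ 2 / δ ^ 2 := by
          rw [le_div_iff₀ (by positivity)]; nlinarith
        have htr : (0 : ℝ) ≤ (T : ℝ) * (T : ℝ) ^ (-(12 * δ ^ 2) : ℝ) := by positivity
        calc (A : ℝ) * ((T : ℝ) * (T : ℝ) ^ (-(12 * δ ^ 2) : ℝ))
            ≤ (∑ a, 1 / q a) * ((T : ℝ) * (T : ℝ) ^ (-(12 * δ ^ 2) : ℝ)) :=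
              mul_le_mul_of_nonneg_right hA2 htr
          _ ≤ (2 / δ ^ 2) * ((∑ a, 1 / q a) * ((T : ℝ) * (T : ℝ) ^ (-(12 * δ ^ 2) : ℝ))) :=
              le_mul_of_one_le_left (by
                have : (0:ℝ) ≤ ∑ a, 1 / q a := Finset.sum_nonneg fun a _ => by
                  have := (hq a).1; positivity
                positivity) h2
          _ = 2 / δ ^ 2 * (T : ℝ) ^ ((1 : ℝ) - 12 * δ ^ 2) * ∑ a, 1 / q a := by
              rw [hr]; ring
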